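/- Let E be an elliptic curve over a field K with char(K) ≠ 2, P ∈ E(K) a non-torsion point, and suppose the quartic polynomial δ_2^P(x) = θ_2(x) − x(P) ψ_2(x)² has a root in an extension L/K with [L:K] ≤ 2. Then E has a K-rational point of order 2 or P has a K-rational half (a point R ∈ E(K) with 2R = P). -/

import Mathlib

open WeierstrassCurve WeierstrassCurve.Affine Polynomial

universe u

open scoped Classical

local notation:max E:max "⟮" S "⟯" => Affine.Point (WeierstrassCurve.baseChange E S)

/-- A model of an isogeny defined over `K` between elliptic curves given by Weierstrass
models `E` and `E'` over `K`, of degree `d`: a compatible family of group homomorphisms on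
points over every field extension of `K`, whose kernel over any algebraically closed
extension of `K` is finite of cardinality `d`. -/
structure KIsogeny (K : Type u) [Field K] (E E' : WeierstrassCurve K) (d : ℕ) where
  hom : ∀ (L : Type u) [Field L] [Algebra K L], E⟮L⟯ →+ E'⟮L⟯
  compat : ∀ (L : Type u) [Field L] [Algebra K L] (M : Type u) [Field M] [Algebra K M]
    (f : L →ₐ[K] M) (P : E⟮L⟯),
      hom M (Point.map (W' := E) f P) = Point.map (W' := E') f (hom L P)
  card_ker : ∀ (L : Type u) [Field L] [Algebra K L] [IsAlgClosed L],
      Nat.card (AddMonoidHom.ker (hom L)) = d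

set_option linter.unusedVariables false
set_option linter.unusedSectionVars false
set_option maxHeartbeats 1000000

section Aux

variable {K : Type u} [Field K]

lemma aux_two_ne_zero (hchar : ringChar K ≠ 2) : (2 : K) ≠ 0 := by
  intro h
  have h2 : ((2 : ℕ) : K) = 0 := by exact_mod_cast h
  have hdvd := (ringChar.spec K 2).mp h2
  rcases (Nat.dvd_prime Nat.prime_two).mp hdvd with h1 | h2'
  · have := ringChar.spec K (ringChar K) |>.mpr dvd_rfl
    rw [h1] at this
    simp at this
  · exact hchar h2'

lemma aux_two_ne_zero' (hchar : ringChar K ≠ 2) (F : Type u) [Field F] [Algebra K F] :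
    (2 : F) ≠ 0 := by
  intro h
  apply aux_two_ne_zero hchar (K := K)
  have : algebraMap K F 2 = 2 := by
    rw [map_ofNat]
  exact (algebraMap K F).injective (by rw [this, h, map_zero])

lemma aux_root_of_linear_dvd {p g : K[X]} (hg : g.natDegree = 1) (hdvd : g ∣ p) :
    ∃ x : K, p.eval x = 0 := by
  obtain ⟨q, rfl⟩ := hdvd
  refine ⟨-g.coeff 0 / g.coeff 1, ?_⟩
  have hg0 : g ≠ 0 := fun h => by simp [h] at hg
  have h1 : g.coeff 1 ≠ 0 := by
    have := Polynomial.leadingCoeff_ne_zero.mpr hg0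
    rwa [Polynomial.leadingCoeff, hg] at this
  rw [eval_mul]
  have hgeq := Polynomial.eq_X_add_C_of_natDegree_le_one (le_of_eq hg)
  have : eval (-g.coeff 0 / g.coeff 1) g = 0 := by
    nth_rewrite 3 [hgeq]
    simp only [eval_add, eval_mul, eval_C, eval_X]
    field_simp
    ring
  rw [this, zero_mul]

lemma aux_root_of_cubic {L : Type u} [Field L] [Algebra K L] [FiniteDimensional K L]
    (hdeg : Module.finrank K L ≤ 2) {p : K[X]} (hp : p.natDegree = 3) {z : L}
    (hz : aeval z p = 0) : ∃ x : K, p.eval x = 0 := by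
  have hint : IsIntegral K z := IsIntegral.of_finite K z
  have hm1 : 0 < (minpoly K z).natDegree := minpoly.natDegree_pos hint
  have hm2 : (minpoly K z).natDegree ≤ 2 := (minpoly.natDegree_le z).trans hdeg
  obtain ⟨q, hq⟩ := minpoly.dvd K z hz
  have hp0 : p ≠ 0 := fun h => by simp [h] at hp
  have hmq0 : minpoly K z ≠ 0 := minpoly.ne_zero hint
  have hq0 : q ≠ 0 := fun h => hp0 (by rw [hq, h, mul_zero])
  have hsum : (minpoly K z).natDegree + q.natDegree = 3 := by
    rw [← Polynomial.natDegree_mul hmq0 hq0, ← hq, hp]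
  rcases Nat.lt_or_ge (minpoly K z).natDegree 2 with h | h
  · exact aux_root_of_linear_dvd (by omega) ⟨q, hq⟩
  · have hq1 : q.natDegree = 1 := by omega
    exact aux_root_of_linear_dvd hq1 ⟨minpoly K z, by rw [hq, mul_comm]⟩

lemma aux_monic_quadratic {p : K[X]} (hm : p.Monic) (h2 : p.natDegree = 2) :
    p = X ^ 2 + C (p.coeff 1) * X + C (p.coeff 0) := by
  ext n
  have hlead : p.coeff 2 = 1 := by
    have := hm.leadingCoeff
    rwa [Polynomial.leadingCoeff, h2] at this
  rcases n with _ | _ | _ | n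
  · simp
  · simp
  · simp [hlead, coeff_X_pow]
  · rw [Polynomial.coeff_eq_zero_of_natDegree_lt (by omega)]
    simp [coeff_X_pow]

end Aux

section Adjoin

variable {F : Type u} [Field F] {c : F}

lemma aux_adjoin_root_sq (c : F) :
    (AdjoinRoot.root (X ^ 2 - C c)) ^ 2 = algebraMap F _ c := by
  have h := AdjoinRoot.mk_self (f := (X ^ 2 - C c))
  rw [map_sub, map_pow, AdjoinRoot.mk_X, AdjoinRoot.mk_C, sub_eq_zero] at h
  rw [h, AdjoinRoot.algebraMap_eq]

lemma aux_adjoin_decomp (x : AdjoinRoot (X ^ 2 - C c)) :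
    ∃ a b : F, x = algebraMap F _ a + algebraMap F _ b * AdjoinRoot.root (X ^ 2 - C c) := by
  obtain ⟨p, rfl⟩ := AdjoinRoot.mk_surjective x
  have hmonic : (X ^ 2 - C c).Monic := monic_X_pow_sub_C c two_ne_zero
  have hmod := Polynomial.modByMonic_add_div p (X ^ 2 - C c)
  have hdeg : (p %ₘ (X ^ 2 - C c)).natDegree ≤ 1 := by
    have := Polynomial.degree_modByMonic_lt p hmonic
    rw [Polynomial.degree_X_pow_sub_C (by norm_num)] at this
    exact Polynomial.natDegree_le_iff_degree_le.mpr (by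
      exact Order.le_of_lt_succ (by exact_mod_cast this))
  refine ⟨(p %ₘ (X ^ 2 - C c)).coeff 0, (p %ₘ (X ^ 2 - C c)).coeff 1, ?_⟩
  conv_lhs => rw [← hmod]
  rw [map_add, map_mul, AdjoinRoot.mk_self, zero_mul, add_zero]
  conv_lhs => rw [Polynomial.eq_X_add_C_of_natDegree_le_one hdeg]
  rw [map_add, map_mul, AdjoinRoot.mk_X, AdjoinRoot.mk_C, AdjoinRoot.mk_C,
    AdjoinRoot.algebraMap_eq, add_comm]

variable [Fact (Irreducible (X ^ 2 - C c))]

lemma aux_adjoin_root_ne_zero (hc : c ≠ 0) : AdjoinRoot.root (X ^ 2 - C c) ≠ 0 := by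
  intro h
  have := aux_adjoin_root_sq c
  rw [h, zero_pow (by norm_num)] at this
  exact hc ((algebraMap F _).injective (by rw [← this, map_zero]))

lemma aux_adjoin_fixed (hc : c ≠ 0) (h2 : (2 : F) ≠ 0)
    (τ : AdjoinRoot (X ^ 2 - C c) →ₐ[F] AdjoinRoot (X ^ 2 - C c))
    (hτ : τ (AdjoinRoot.root (X ^ 2 - C c)) = - AdjoinRoot.root (X ^ 2 - C c))
    (x : AdjoinRoot (X ^ 2 - C c)) (hx : τ x = x) :
    ∃ k : F, algebraMap F _ k = x := by
  obtain ⟨a, b, rfl⟩ := aux_adjoin_decomp x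
  set ρ := AdjoinRoot.root (X ^ 2 - C c)
  have hτx : τ (algebraMap F _ a + algebraMap F _ b * ρ)
      = algebraMap F _ a - algebraMap F _ b * ρ := by
    rw [map_add, map_mul, τ.commutes, τ.commutes, hτ, mul_neg, ← sub_eq_add_neg]
  rw [hτx] at hx
  have hu : algebraMap F _ b * ρ = 0 := by
    have h2A : (2 : AdjoinRoot (X ^ 2 - C c)) ≠ 0 := by
      intro h
      have h2' : algebraMap F (AdjoinRoot (X ^ 2 - C c)) 2 = 0 := by
        rw [map_ofNat]; exact h
      exact h2 ((algebraMap F _).injective (by rw [h2', map_zero]))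
    have : (2 : AdjoinRoot (X ^ 2 - C c)) * (algebraMap F _ b * ρ) = 0 := by
      linear_combination - hx
    rcases mul_eq_zero.mp this with h | h
    · exact absurd h h2A
    · exact h
  rcases mul_eq_zero.mp hu with h | h
  · have hb : b = 0 := (algebraMap F _).injective (by rw [h, map_zero])
    exact ⟨a, by rw [hb, map_zero, zero_mul, add_zero]⟩
  · exact absurd h (aux_adjoin_root_ne_zero hc)

lemma aux_adjoin_tau_exists (hc : c ≠ 0) :
    ∃ τ : AdjoinRoot (X ^ 2 - C c) →ₐ[F] AdjoinRoot (X ^ 2 - C c),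
      τ (AdjoinRoot.root (X ^ 2 - C c)) = - AdjoinRoot.root (X ^ 2 - C c) ∧
      ∀ x, τ (τ x) = x := by
  have hroot : aeval (- AdjoinRoot.root (X ^ 2 - C c)) (X ^ 2 - C c) = 0 := by
    rw [map_sub, map_pow, aeval_X, aeval_C, neg_pow, aux_adjoin_root_sq c]
    ring
  refine ⟨AdjoinRoot.liftAlgHom _ (Algebra.ofId F (AdjoinRoot (X ^ 2 - C c))) _ hroot, AdjoinRoot.liftAlgHom_root _ (Algebra.ofId F (AdjoinRoot (X ^ 2 - C c))) _ hroot, ?_⟩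
  have hid : (AdjoinRoot.liftAlgHom _ (Algebra.ofId F (AdjoinRoot (X ^ 2 - C c))) _ hroot).comp (AdjoinRoot.liftAlgHom _ (Algebra.ofId F (AdjoinRoot (X ^ 2 - C c))) _ hroot)
      = AlgHom.id F (AdjoinRoot (X ^ 2 - C c)) := by
    apply AdjoinRoot.algHom_ext
    have hr := AdjoinRoot.liftAlgHom_root _ (Algebra.ofId F (AdjoinRoot (X ^ 2 - C c))) _ hroot
    rw [AlgHom.comp_apply, hr, map_neg, hr,
      neg_neg, AlgHom.id_apply]
  intro x
  exact AlgHom.congr_fun hid x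

end Adjoin

section Double

variable {K : Type u} [Field K] (E : WeierstrassCurve K)
variable {F : Type u} [Field F] [Algebra K F]

lemma aux_psisq_eval {z y : F} (h : (E.baseChange F).toAffine.Equation z y) :
    (aeval z) (E.ΨSq 2) = (y - (E.baseChange F).toAffine.negY z y) ^ 2 := by
  have heq := ((E.baseChange F).toAffine.equation_iff z y).mp h
  simp only [WeierstrassCurve.baseChange, map_a₁, map_a₂, map_a₃, map_a₄, map_a₆] at heq
  rw [ΨSq_two, Ψ₂Sq]
  simp only [negY, WeierstrassCurve.baseChange, map_a₁, map_a₂, map_a₃, map_a₄, map_a₆, b₂, b₄, b₆,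
    map_add, map_mul, map_pow, aeval_C, aeval_X, map_ofNat]
  linear_combination (-4 : F) * heq

lemma aux_double_addX {z y : F} (h : (E.baseChange F).toAffine.Equation z y)
    (hy : y ≠ (E.baseChange F).toAffine.negY z y) :
    (E.baseChange F).toAffine.addX z z ((E.baseChange F).toAffine.slope z z y y) *
      (aeval z) (E.ΨSq 2) = (aeval z) (E.Φ 2) := by
  have heq := ((E.baseChange F).toAffine.equation_iff z y).mp h
  simp only [WeierstrassCurve.baseChange, map_a₁, map_a₂, map_a₃, map_a₄, map_a₆] at heq
  have hw : y - (E.baseChange F).toAffine.negY z y ≠ 0 := sub_ne_zero.mpr hy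
  have key : (3 * z ^ 2 + 2 * (E.baseChange F).a₂ * z + (E.baseChange F).a₄
        - (E.baseChange F).a₁ * y) / (y - (E.baseChange F).toAffine.negY z y) *
      (y - (E.baseChange F).toAffine.negY z y)
      = 3 * z ^ 2 + 2 * (E.baseChange F).a₂ * z + (E.baseChange F).a₄
        - (E.baseChange F).a₁ * y := div_mul_cancel₀ _ hw
  rw [slope_of_Y_ne rfl hy, aux_psisq_eval E h, Φ_two]
  simp only [addX, negY, WeierstrassCurve.baseChange, map_a₁, map_a₂, map_a₃, map_a₄, map_a₆, b₂, b₄, b₆, b₈,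
    map_add, map_mul, map_pow, map_sub, aeval_C, aeval_X, map_ofNat] at key ⊢
  set A1 := algebraMap K F E.a₁
  set A2 := algebraMap K F E.a₂
  set A3 := algebraMap K F E.a₃
  set A4 := algebraMap K F E.a₄
  set A6 := algebraMap K F E.a₆
  set n := 3 * z ^ 2 + 2 * A2 * z + A4 - A1 * y
  set w := y - (-y - A1 * z - A3)
  set s := n / w
  linear_combination (s * w + n + A1 * w) * key - (A1 ^ 2 + 4 * A2 + 8 * z) * heq

end Double

section DoubleEq

variable {K : Type u} [Field K] (E : WeierstrassCurve K) [E.IsElliptic]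
variable {F : Type u} [Field F] [Algebra K F]

lemma aux_double_eq {xP yP : K}
    (hP : (E.baseChange K).toAffine.Nonsingular xP yP)
    {z y : F} (hns : (E.baseChange F).toAffine.Nonsingular z y)
    (hz : (aeval z) (E.Φ 2 - C xP * E.ΨSq 2) = 0)
    (hd : (aeval z) (E.ΨSq 2) ≠ 0) :
    2 • (Point.some _ _ hns) = Point.map (W' := E) (Algebra.ofId K F) (Point.some _ _ hP) ∨
    2 • (Point.some _ _ hns) = - Point.map (W' := E) (Algebra.ofId K F) (Point.some _ _ hP) := by
  have hy : y ≠ (E.baseChange F).toAffine.negY z y := by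
    intro h
    apply hd
    rw [aux_psisq_eval E hns.1, ← h, sub_self]
    ring
  have hxP : (aeval z) (E.Φ 2) = algebraMap K F xP * (aeval z) (E.ΨSq 2) := by
    simpa [map_sub, map_mul, aeval_C, sub_eq_zero] using hz
  have hxx : (E.baseChange F).toAffine.addX z z ((E.baseChange F).toAffine.slope z z y y)
      = algebraMap K F xP := by
    have h1 := aux_double_addX E hns.1 hy
    rw [hxP] at h1
    exact mul_right_cancel₀ hd h1
  have hPF : (E.baseChange F).toAffine.Nonsingular ((Algebra.ofId K F) xP)
      ((Algebra.ofId K F) yP) :=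
    (Affine.baseChange_nonsingular (W := E.toAffine) (Algebra.ofId K F).injective xP yP).mpr hP
  have hxx' : (E.baseChange F).toAffine.addX z z ((E.baseChange F).toAffine.slope z z y y)
      = (Algebra.ofId K F) xP := hxx
  rw [two_nsmul, Point.add_self_of_Y_ne hy]
  have hcases := Y_eq_of_X_eq (nonsingular_add hns hns fun h => hy h.2).1 hPF.1 hxx'
  rcases hcases with hyy | hyy
  · left
    rw [Point.map_some]
    simp only [Point.some.injEq]
    exact ⟨hxx', hyy⟩
  · right
    rw [Point.map_some, Point.neg_some]
    simp only [Point.some.injEq]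
    exact ⟨hxx', hyy⟩

end DoubleEq

lemma aux_sigma_exists {K L : Type u} [Field K] [Field L] (hchar : ringChar K ≠ 2)
    [Algebra K L] [FiniteDimensional K L] (hdeg : Module.finrank K L ≤ 2) :
    ∃ σ : L →ₐ[K] L, (∀ a, σ (σ a) = a) ∧
      ∀ a, σ a = a → ∃ k, algebraMap K L k = a := by
  by_cases h1 : ∀ a : L, ∃ k, algebraMap K L k = a
  · exact ⟨AlgHom.id K L, fun a => rfl, fun a _ => h1 a⟩
  push_neg at h1
  obtain ⟨α, hα⟩ := h1
  have h2K : (2 : K) ≠ 0 := aux_two_ne_zero hchar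
  have h4K : (4 : K) ≠ 0 := by
    intro h
    apply h2K
    have : (4 : K) = 2 * 2 := by norm_num
    rcases mul_eq_zero.mp (this ▸ h) with h | h <;> exact h
  have hint : IsIntegral K α := IsIntegral.of_finite K α
  have hmon := minpoly.monic hint
  have hm1 : 0 < (minpoly K α).natDegree := minpoly.natDegree_pos hint
  have hm2 : (minpoly K α).natDegree ≤ 2 := (minpoly.natDegree_le α).trans hdeg
  have haev := minpoly.aeval K α
  have hmne : (minpoly K α).natDegree ≠ 1 := by
    intro h
    have hc1 : (minpoly K α).coeff 1 = 1 := by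
      have := hmon.leadingCoeff
      rwa [Polynomial.leadingCoeff, h] at this
    have heq := Polynomial.eq_X_add_C_of_natDegree_le_one (le_of_eq h)
    rw [heq, hc1] at haev
    simp only [map_add, map_mul, map_one, aeval_X, aeval_C, C_1, one_mul] at haev
    exact hα (-(minpoly K α).coeff 0) (by rw [map_neg, neg_eq_iff_add_eq_zero, add_comm]; exact haev)
  have hm2' : (minpoly K α).natDegree = 2 := by omega
  set b := (minpoly K α).coeff 1 with hb
  set c := (minpoly K α).coeff 0 with hc
  have key : α ^ 2 + algebraMap K L b * α + algebraMap K L c = 0 := by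
    have := aux_monic_quadratic hmon hm2'
    rw [this] at haev
    simpa [map_add, map_mul, map_pow, aeval_X, aeval_C] using haev
  set d : K := (b / 2) ^ 2 - c with hd
  set β : L := α + algebraMap K L (b / 2) with hβdef
  have h2L : (2 : L) ≠ 0 := by
    intro h
    apply h2K
    have h2 : algebraMap K L 2 = 0 := by rw [map_ofNat]; exact h
    exact (algebraMap K L).injective (by rw [h2, map_zero])
  have h2b : algebraMap K L (b / 2) * 2 = algebraMap K L b := by
    rw [map_div₀, map_ofNat]
    field_simp
  have hβ2 : β ^ 2 = algebraMap K L d := by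
    rw [hβdef, hd, map_sub, map_pow]
    linear_combination key + α * h2b
  have hβ : ∀ k : K, algebraMap K L k ≠ β := by
    intro k hk
    exact hα (k - b / 2) (by rw [map_sub]; rw [hk, hβdef]; ring)
  have hd_ns : ∀ e : K, e ^ 2 ≠ d := by
    intro e he
    have hsq : β ^ 2 = (algebraMap K L e) ^ 2 := by rw [hβ2, ← he, map_pow]
    have : (β - algebraMap K L e) * (β + algebraMap K L e) = 0 := by
      linear_combination hsq
    rcases mul_eq_zero.mp this with h | h
    · exact hβ e (by linear_combination -h)
    · exact hβ (-e) (by rw [map_neg]; linear_combination -h)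
  have hdne : d ≠ 0 := fun h => hd_ns 0 (by rw [h]; ring)
  have hirr : Irreducible (X ^ 2 - C d : K[X]) :=
    X_pow_sub_C_irreducible_of_prime Nat.prime_two hd_ns
  letI := Fact.mk hirr
  set A := AdjoinRoot (X ^ 2 - C d : K[X])
  have hrootβ : aeval β (X ^ 2 - C d : K[X]) = 0 := by
    rw [map_sub, map_pow, aeval_X, aeval_C, hβ2, sub_self]
  set e : A →ₐ[K] L := AdjoinRoot.liftAlgHom _ (Algebra.ofId K L) β hrootβ with he
  have einj : Function.Injective e := e.toRingHom.injective
  have hli : LinearIndependent K ![β, (1 : L)] := by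
    rw [linearIndependent_fin2]
    refine ⟨one_ne_zero, fun a ha => hβ a ?_⟩
    rw [Algebra.algebraMap_eq_smul_one]
    exact ha
  have hfin : Module.finrank K L = 2 := by
    refine le_antisymm hdeg ?_
    have := hli.fintype_card_le_finrank
    simpa using this
  have esurj : Function.Surjective e := by
    intro x
    have hspan : Submodule.span K (Set.range ![β, (1 : L)]) = ⊤ := by
      let bas := basisOfLinearIndependentOfCardEqFinrank hli (by simp [hfin])
      have hcoe := coe_basisOfLinearIndependentOfCardEqFinrank hli (by simp [hfin])
      have := bas.span_eq
      rwa [show ⇑bas = ![β, (1 : L)] from hcoe] at this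
    have hle : Submodule.span K (Set.range ![β, (1 : L)]) ≤ LinearMap.range e.toLinearMap := by
      rw [Submodule.span_le]
      rintro t ⟨i, rfl⟩
      fin_cases i
      · refine ⟨AdjoinRoot.root _, ?_⟩
        simp only [AlgHom.toLinearMap_apply, he]
        exact AdjoinRoot.liftAlgHom_root _ (Algebra.ofId K L) _ hrootβ
      · refine ⟨1, ?_⟩
        simp
    have hx : x ∈ LinearMap.range e.toLinearMap := hle (by rw [hspan]; trivial)
    obtain ⟨a, ha⟩ := hx
    exact ⟨a, ha⟩
  set e' : A ≃ₐ[K] L := AlgEquiv.ofBijective e ⟨einj, esurj⟩ with he'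
  obtain ⟨τ, hτroot, hττ⟩ := aux_adjoin_tau_exists hdne
  refine ⟨(e'.toAlgHom.comp τ).comp e'.symm.toAlgHom, ?_, ?_⟩
  · intro a
    simp only [AlgHom.comp_apply, AlgEquiv.toAlgHom_eq_coe, AlgHom.coe_coe, AlgEquiv.coe_toAlgHom,
      AlgEquiv.symm_apply_apply]
    rw [hττ, AlgEquiv.apply_symm_apply]
  · intro a ha
    simp only [AlgHom.comp_apply, AlgEquiv.toAlgHom_eq_coe, AlgHom.coe_coe, AlgEquiv.coe_toAlgHom] at ha
    have hfix : τ (e'.symm a) = e'.symm a := by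
      apply e'.injective
      rw [ha, AlgEquiv.apply_symm_apply]
    obtain ⟨k, hk⟩ := aux_adjoin_fixed hdne h2K τ hτroot _ hfix
    refine ⟨k, ?_⟩
    have := congrArg e' hk
    rwa [AlgEquiv.apply_symm_apply, e'.commutes k] at this

section Points

variable {K : Type u} [Field K] (E : WeierstrassCurve K)

lemma aux_map_fixed {L : Type u} [Field L] [Algebra K L] (f : L →ₐ[K] L)
    (hf : ∀ a, f a = a) (Q : E⟮L⟯) : Point.map (W' := E) f Q = Q := by
  rcases Q with _ | ⟨x, y, h⟩
  · rfl
  · rw [Point.map_some]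
    simp only [Point.some.injEq]
    exact ⟨hf x, hf y⟩

lemma aux_descend {L : Type u} [Field L] [Algebra K L] (σ : L →ₐ[K] L)
    (hfix : ∀ a, σ a = a → ∃ k, algebraMap K L k = a)
    (Q : E⟮L⟯) (hQ : Point.map (W' := E) σ Q = Q) :
    ∃ Q₀ : E⟮K⟯, Point.map (W' := E) (Algebra.ofId K L) Q₀ = Q := by
  rcases Q with _ | ⟨x, y, h⟩
  · exact ⟨0, rfl⟩
  · rw [Point.map_some] at hQ
    simp only [Point.some.injEq] at hQ
    obtain ⟨hx, hy⟩ := hQ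
    obtain ⟨x₀, hx₀⟩ := hfix x hx
    obtain ⟨y₀, hy₀⟩ := hfix y hy
    have hx₀' : (Algebra.ofId K L) x₀ = x := hx₀
    have hy₀' : (Algebra.ofId K L) y₀ = y := hy₀
    have h₀ : (E.baseChange K).toAffine.Nonsingular x₀ y₀ := by
      apply (Affine.baseChange_nonsingular (W := E.toAffine)
        (Algebra.ofId K L).injective x₀ y₀).mp
      rw [hx₀', hy₀']
      exact h
    refine ⟨Point.some _ _ h₀, ?_⟩
    rw [Point.map_some]
    simp only [Point.some.injEq]
    exact ⟨hx₀', hy₀'⟩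

variable [E.IsElliptic]

lemma aux_point_of_sqrt {F : Type u} [Field F] [Algebra K F] (h2 : (2 : F) ≠ 0)
    {z w : F} (hw : w ^ 2 = (aeval z) (E.ΨSq 2)) :
    ∃ (y : F) (hns : (E.baseChange F).toAffine.Nonsingular z y),
      y - (E.baseChange F).toAffine.negY z y = w := by
  have h4 : (4 : F) ≠ 0 := by
    intro h
    apply h2
    have h4' : (4 : F) = 2 * 2 := by norm_num
    rcases mul_eq_zero.mp (h4' ▸ h) with h | h <;> exact h
  set A1 := algebraMap K F E.a₁ with hA1
  set A3 := algebraMap K F E.a₃ with hA3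
  set y : F := (w - A1 * z - A3) / 2 with hy
  have h2y : 2 * y = w - A1 * z - A3 := by
    rw [hy]; field_simp
  have hw' : w ^ 2 = 4 * z ^ 3 + (algebraMap K F E.b₂) * z ^ 2
      + 2 * (algebraMap K F E.b₄) * z + algebraMap K F E.b₆ := by
    rw [hw, ΨSq_two, Ψ₂Sq]
    simp only [map_add, map_mul, map_pow, aeval_C, aeval_X, map_ofNat]
  have heq : (E.baseChange F).toAffine.Equation z y := by
    rw [Affine.equation_iff]
    simp only [WeierstrassCurve.baseChange, map_a₁, map_a₂, map_a₃, map_a₄, map_a₆]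
    apply mul_left_cancel₀ h4
    simp only [b₂, b₄, b₆, map_add, map_mul, map_pow, map_ofNat] at hw'
    linear_combination (2 * y + w + A1 * z + A3) * h2y + hw'
  have hns : (E.baseChange F).toAffine.Nonsingular z y :=
    (Affine.equation_iff_nonsingular (W := (E.map (algebraMap K F)).toAffine)).mp heq
  refine ⟨y, hns, ?_⟩
  simp only [negY, WeierstrassCurve.baseChange, map_a₁, map_a₃]
  linear_combination h2y

lemma aux_no_sqrt_contra (hchar : ringChar K ≠ 2) {xP yP : K}
    (hP : (E.baseChange K).toAffine.Nonsingular xP yP)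
    {L : Type u} [Field L] [Algebra K L]
    {z : L} (hz : (aeval z) (E.Φ 2 - C xP * E.ΨSq 2) = 0)
    (hd : (aeval z) (E.ΨSq 2) ≠ 0)
    (hnsq : ∀ w : L, w ^ 2 ≠ (aeval z) (E.ΨSq 2)) :
    2 • (Point.some _ _ hP : E⟮K⟯) = 0 := by
  set c := (aeval z) (E.ΨSq 2) with hc
  have hirr : Irreducible (X ^ 2 - C c : L[X]) :=
    X_pow_sub_C_irreducible_of_prime Nat.prime_two hnsq
  letI := Fact.mk hirr
  set M := AdjoinRoot (X ^ 2 - C c : L[X]) with hM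
  letI : IsScalarTower K L M := IsScalarTower.of_algebraMap_eq' rfl
  have h2M : (2 : M) ≠ 0 := aux_two_ne_zero' hchar M
  set z' : M := algebraMap L M z with hz'
  have htrans : ∀ p : K[X], (aeval z') p = algebraMap L M ((aeval z) p) := by
    intro p
    rw [hz']
    exact Polynomial.aeval_algebraMap_apply M z p
  have hz'' : (aeval z') (E.Φ 2 - C xP * E.ΨSq 2) = 0 := by
    rw [htrans, hz, map_zero]
  have hd' : (aeval z') (E.ΨSq 2) ≠ 0 := by
    rw [htrans]
    intro h
    exact hd ((algebraMap L M).injective (by rw [h, map_zero]))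
  set w : M := AdjoinRoot.root (X ^ 2 - C c) with hwdef
  have hw : w ^ 2 = (aeval z') (E.ΨSq 2) := by
    rw [htrans, ← hc, hwdef]
    exact aux_adjoin_root_sq c
  obtain ⟨y, hns, hyw⟩ := aux_point_of_sqrt E h2M hw
  have hcne : c ≠ 0 := fun h => hd (hc ▸ h)
  have hwne : w ≠ 0 := by
    intro h
    apply hcne
    have := aux_adjoin_root_sq c
    rw [← hwdef, h, zero_pow (by norm_num)] at this
    exact (algebraMap L M).injective (by rw [← this, map_zero])
  -- the involution τ on M over L
  have hτaev : aeval (-w) (X ^ 2 - C c : L[X]) = 0 := by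
    rw [map_sub, map_pow, aeval_X, aeval_C, neg_pow, hwdef, aux_adjoin_root_sq c]
    ring
  set τ : M →ₐ[K] M := (AdjoinRoot.liftAlgHom _ (Algebra.ofId L M) (-w) hτaev).restrictScalars K with hτdef
  have hτw : τ w = -w := AdjoinRoot.liftAlgHom_root _ (Algebra.ofId L M) _ hτaev
  have hτz : τ z' = z' := (AdjoinRoot.liftAlgHom _ (Algebra.ofId L M) (-w) hτaev).commutes z
  have hτK : ∀ k : K, τ (algebraMap K M k) = algebraMap K M k := fun k => τ.commutes k
  -- image of the point R under τ is -R
  set R : E⟮M⟯ := Point.some _ _ hns with hR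
  have hτR : Point.map (W' := E) τ R = -R := by
    rw [hR, Point.map_some, Point.neg_some]
    simp only [Point.some.injEq]
    refine ⟨hτz, ?_⟩
    have himg : (E.baseChange M).toAffine.Equation (τ z') (τ y) := by
      exact (Affine.baseChange_equation (W := E.toAffine) (f := τ) τ.injective z' y).mpr hns.1
    rw [hτz] at himg
    have hτnegY : τ ((E.baseChange M).toAffine.negY z' y)
        = (E.baseChange M).toAffine.negY z' (τ y) := by
      have h := Affine.baseChange_negY (W' := E.toAffine) τ z' y
      rw [hτz] at h
      exact h.symm
    rcases Y_eq_of_X_eq himg hns.1 rfl with hcase | hcase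
    · exfalso
      have h1 : τ y - (E.baseChange M).toAffine.negY z' (τ y) = -w := by
        have h0 := congrArg τ hyw
        rw [map_sub, hτnegY, hτw] at h0
        exact h0
      rw [hcase, hyw] at h1
      apply hwne
      have h2w : (2 : M) * w = 0 := by linear_combination h1
      rcases mul_eq_zero.mp h2w with h | h
      · exact absurd h h2M
      · exact h
    · exact hcase
  have hPM := aux_double_eq E hP hns hz'' hd'
  rw [← hR] at hPM
  set PM : E⟮M⟯ := Point.map (W' := E) (Algebra.ofId K M) (Point.some _ _ hP) with hPMdef
  have hτPM : Point.map (W' := E) τ PM = PM := by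
    rw [hPMdef, Point.map_map]
    have heq : τ.comp (Algebra.ofId K M) = Algebra.ofId K M := Subsingleton.elim _ _
    rw [heq]
  have hτ2R : Point.map (W' := E) τ (2 • R) = -(2 • R) := by
    rw [map_nsmul, hτR, two_nsmul, two_nsmul, neg_add]
  have h2PM : PM + PM = 0 := by
    rcases hPM with h | h
    · rw [h, hτPM] at hτ2R
      nth_rewrite 1 [hτ2R]
      rw [neg_add_cancel]
    · have h' : 2 • R = -PM := h
      rw [h', map_neg, hτPM] at hτ2R
      have : PM = -PM := by
        rw [neg_neg] at hτ2R
        exact hτ2R.symm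
      nth_rewrite 1 [this]
      rw [neg_add_cancel]
  apply Point.map_injective (W' := E.toAffine) (f := Algebra.ofId K M)
  rw [map_nsmul, map_zero, two_nsmul]
  exact h2PM

end Points


/-- If the quartic `δ_2^P` has a root in an extension of degree at most `2`, then `E` has a
`K`-rational point of order `2` or `P` has a `K`-rational half. -/
theorem stmt13 (K : Type u) [Field K] (hchar : ringChar K ≠ 2)
    (E : WeierstrassCurve K) [E.IsElliptic]
    (xP yP : K) (hP : (E.baseChange K).toAffine.Nonsingular xP yP)
    (P : E⟮K⟯) (hPeq : P = Point.some _ _ hP)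
    (hPtor : ∀ n : ℕ, n ≠ 0 → n • P ≠ 0)
    (L : Type u) [Field L] [Algebra K L] [FiniteDimensional K L]
    (hdeg : Module.finrank K L ≤ 2)
    (z : L) (hz : aeval z (E.Φ 2 - C xP * E.ΨSq 2) = 0) :
    (∃ T : E⟮K⟯, T ≠ 0 ∧ 2 • T = 0) ∨ (∃ R : E⟮K⟯, 2 • R = P) := by
  subst hPeq
  have h2K : (2 : K) ≠ 0 := aux_two_ne_zero hchar
  have h4K : (4 : K) ≠ 0 := by
    intro h
    apply h2K
    have h4' : (4 : K) = 2 * 2 := by norm_num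
    rcases mul_eq_zero.mp (h4' ▸ h) with h | h <;> exact h
  by_cases hsq : (aeval z) (E.ΨSq 2) = 0
  · -- `z` is a root of the 2-division polynomial: K-rational 2-torsion exists
    left
    have hdeg3 : (E.Ψ₂Sq).natDegree = 3 := E.natDegree_Ψ₂Sq h4K
    have hz3 : aeval z E.Ψ₂Sq = 0 := by rwa [ΨSq_two] at hsq
    obtain ⟨x₀, hx₀⟩ := aux_root_of_cubic hdeg hdeg3 hz3
    rw [Ψ₂Sq] at hx₀
    simp only [eval_add, eval_mul, eval_pow, eval_C, eval_X, b₂, b₄, b₆] at hx₀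
    set y₀ : K := -(E.a₁ * x₀ + E.a₃) / 2 with hy₀
    have h2y : 2 * y₀ = -(E.a₁ * x₀ + E.a₃) := by rw [hy₀]; field_simp
    have hEq : (E.baseChange K).toAffine.Equation x₀ y₀ := by
      rw [Affine.equation_iff]
      simp only [WeierstrassCurve.baseChange, map_a₁, map_a₂, map_a₃, map_a₄, map_a₆, Algebra.algebraMap_self_apply]
      apply mul_left_cancel₀ h4K
      linear_combination (2 * y₀ + E.a₁ * x₀ + E.a₃) * h2y - hx₀
    have hns : (E.baseChange K).toAffine.Nonsingular x₀ y₀ :=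
      (Affine.equation_iff_nonsingular (W := (E.map (algebraMap K K)).toAffine)).mp hEq
    refine ⟨Point.some _ _ hns, Point.some_ne_zero hns, ?_⟩
    rw [two_nsmul]
    apply Point.add_self_of_Y_eq
    simp only [negY, WeierstrassCurve.baseChange, map_a₁, map_a₃, Algebra.algebraMap_self_apply]
    linear_combination h2y
  · by_cases hsqrt : ∃ w : L, w ^ 2 = (aeval z) (E.ΨSq 2)
    · -- case 2a: a half of P exists over L, descend to K
      obtain ⟨w, hw⟩ := hsqrt
      have h2L : (2 : L) ≠ 0 := aux_two_ne_zero' hchar L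
      obtain ⟨y, hns, hyw⟩ := aux_point_of_sqrt E h2L hw
      have hdouble := aux_double_eq E hP hns hz hsq
      obtain ⟨σ, hσσ, hσfix⟩ := aux_sigma_exists hchar hdeg
      set R : E⟮L⟯ := Point.some _ _ hns with hRdef
      set PL : E⟮L⟯ := Point.map (W' := E) (Algebra.ofId K L) (Point.some _ _ hP) with hPL
      have hσPL : Point.map (W' := E) σ PL = PL := by
        rw [hPL, Point.map_map, Subsingleton.elim (σ.comp (Algebra.ofId K L)) (Algebra.ofId K L)]
      have hσ2R : Point.map (W' := E) σ (2 • R) = 2 • R := by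
        rcases hdouble with h | h
        · rw [h, hσPL]
        · rw [h, map_neg, hσPL]
      set T : E⟮L⟯ := Point.map (W' := E) σ R - R with hT
      by_cases hT0 : T = 0
      · right
        have hfixR : Point.map (W' := E) σ R = R := by rwa [hT, sub_eq_zero] at hT0
        obtain ⟨R₀, hR₀⟩ := aux_descend E σ hσfix R hfixR
        rcases hdouble with h | h
        · refine ⟨R₀, ?_⟩
          apply Point.map_injective (W' := E.toAffine) (f := Algebra.ofId K L)
          rw [map_nsmul, hR₀, h, hPL]
        · refine ⟨-R₀, ?_⟩
          apply Point.map_injective (W' := E.toAffine) (f := Algebra.ofId K L)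
          rw [map_nsmul, map_neg, hR₀, ← hPL]
          rw [two_nsmul, ← neg_add]
          rw [← two_nsmul, h, neg_neg]
      · left
        have h2T : T + T = 0 := by
          have hsm : 2 • Point.map (W' := E) σ R = 2 • R := by rw [← map_nsmul, hσ2R]
          rw [hT]
          calc (Point.map (W' := E) σ R - R) + (Point.map (W' := E) σ R - R)
              = (Point.map (W' := E) σ R + Point.map (W' := E) σ R) - (R + R) := by abel
            _ = 0 := by rw [← two_nsmul, ← two_nsmul, hsm, sub_self]
        have hσT : Point.map (W' := E) σ T = T := by
          have hcomp : ∀ a, (σ.comp σ) a = a := fun a => hσσ a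
          have hTneg : T = -T := eq_neg_of_add_eq_zero_left h2T
          rw [hT, map_sub, Point.map_map, aux_map_fixed E (σ.comp σ) hcomp R]
          calc R - Point.map (W' := E) σ R = -(Point.map (W' := E) σ R - R) := by abel
            _ = -T := by rw [hT]
            _ = T := hTneg.symm
        obtain ⟨T₀, hT₀⟩ := aux_descend E σ hσfix T hσT
        refine ⟨T₀, ?_, ?_⟩
        · intro h0
          apply hT0
          rw [← hT₀, h0, map_zero]
        · apply Point.map_injective (W' := E.toAffine) (f := Algebra.ofId K L)
          rw [map_nsmul, hT₀, map_zero, two_nsmul]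
          exact h2T
    · -- case 2b: contradiction with non-torsion
      push_neg at hsqrt
      exact absurd (aux_no_sqrt_contra E hchar hP hz hsq hsqrt) (hPtor 2 (by norm_num))
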